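/- Let n = ∑_{i=1}^r ∑_{k=l_i}^{m_i} 2^k be the decomposition of n into maximal blocks of consecutive binary digits (m_1 ≥ l_1 > l_1 − 2 ≥ m_2 ≥ ... ≥ m_r ≥ l_r ≥ 0). Then there is an absolute constant c such that |n K_n| ≤ c ∑_{A=1}^r ( 2^{l_A} |K_{2^{l_A}}| + 2^{m_A} |K_{2^{m_A}}| + 2^{l_A} ∑_{k=l_A}^{m_A} D_{2^k} ) + c V(n) pointwise on G, where V(n) = n_0 + ∑_{k≥1} |n_k − n_{k−1}| is the binary variation of n. -/

import Mathlib

open MeasureTheory Filter Topology ENNReal NNReal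

noncomputable section

/-- The dyadic group `G = (ℤ/2)^ℕ`. -/
abbrev G : Type := ℕ → ZMod 2

instance : TopologicalSpace (ZMod 2) := ⊥
instance : DiscreteTopology (ZMod 2) := ⟨rfl⟩
instance : MeasurableSpace G := borel G
instance : BorelSpace G := ⟨rfl⟩

/-- Normalized Haar measure on `G`. -/
def μG : Measure G := Measure.addHaarMeasure ⟨⟨Set.univ, isCompact_univ⟩, by simp⟩

/-- Cylinder `I_n(x) = {y : y_0 = x_0, ..., y_{n-1} = x_{n-1}}`. -/
def cyl (n : ℕ) (x : G) : Set G := {y | ∀ k < n, y k = x k}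

/-- `I_n = I_n(0)`. -/
def I₀ (n : ℕ) : Set G := cyl n 0

/-- `e t`: the element of `G` with a single 1 in coordinate `t`. -/
def e (t : ℕ) : G := fun k => if k = t then 1 else 0

/-- Rademacher functions `r_k(x) = (-1)^{x_k}`. -/
def rade (k : ℕ) (x : G) : ℝ := (-1 : ℝ) ^ (x k).val

/-- Walsh functions `w_n = ∏ r_k^{n_k}` (binary digits `n_k` of `n`). -/
def walsh (n : ℕ) (x : G) : ℝ :=
  ∏ k ∈ Finset.range (n + 1), if n.testBit k then rade k x else 1

/-- Walsh–Dirichlet kernel `D_n = ∑_{k<n} w_k`. -/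
def D (n : ℕ) (x : G) : ℝ := ∑ k ∈ Finset.range n, walsh k x

/-- Walsh–Fejér kernel `K_n = (1/n) ∑_{k=1}^n D_k`. -/
def K (n : ℕ) (x : G) : ℝ := (1 / n) * ∑ k ∈ Finset.Icc 1 n, D k x

/-- Binary variation `V(n) = n_0 + ∑_{k≥1} |n_k - n_{k-1}|`. -/
def V (n : ℕ) : ℕ :=
  (if n.testBit 0 then 1 else 0) +
    ∑ k ∈ Finset.Icc 1 (n + 1), if n.testBit k ≠ n.testBit (k - 1) then 1 else 0

/-- `|n|`: index of the highest nonzero binary digit of `n`. -/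
def hi (n : ℕ) : ℕ := Nat.log 2 n

/-- `[n]`: index of the lowest nonzero binary digit of `n`. -/
def lo (n : ℕ) : ℕ := padicValNat 2 n

/-- `d(n) = |n| - [n]`. -/
def dd (n : ℕ) : ℕ := hi n - lo n

/-- A dyadic martingale: `F n` depends only on the first `n` coordinates, and
`F n` is the average of the two possible extensions, i.e. the martingale property
with respect to the dyadic filtration. -/
def IsDyadicMartingale (F : ℕ → G → ℝ) : Prop :=
  (∀ n x y, (∀ k < n, x k = y k) → F n x = F n y) ∧
  (∀ n x, F n x = (F (n+1) x + F (n+1) (Function.update x n (x n + 1))) / 2)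

/-- `k`-th Walsh–Fourier coefficient of a martingale,
`F̂(k) = lim_n ∫ F_n w_k dμ` (the integrals are eventually constant). -/
def mcoeff (F : ℕ → G → ℝ) (k : ℕ) : ℝ := ∫ x, F (k+1) x * walsh k x ∂μG

/-- Partial sums `S_m F` of the Walsh–Fourier series of a martingale. -/
def S (F : ℕ → G → ℝ) (m : ℕ) (x : G) : ℝ := ∑ j ∈ Finset.range m, mcoeff F j * walsh j x

/-- Fejér means `σ_n F = (1/n) ∑_{k=1}^n S_k F`. -/
def σ (F : ℕ → G → ℝ) (n : ℕ) (x : G) : ℝ := (1 / n) * ∑ k ∈ Finset.Icc 1 n, S F k x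

/-- `H_p` quasi-norm of a martingale: `‖sup_n |F_n|‖_{L_p}`. -/
def HpNorm (p : ℝ) (F : ℕ → G → ℝ) : ℝ≥0∞ :=
  (∫⁻ x, (⨆ n, (‖F n x‖₊ : ℝ≥0∞)) ^ p ∂μG) ^ (1 / p)

/-- Membership in the martingale Hardy space `H_p(G)`. -/
def MemHp (p : ℝ) (F : ℕ → G → ℝ) : Prop := IsDyadicMartingale F ∧ HpNorm p F < ⊤

/-- `L_p` quasi-norm of a function on `G`. -/
def LpN (p : ℝ) (f : G → ℝ) : ℝ≥0∞ := (∫⁻ x, (‖f x‖₊ : ℝ≥0∞) ^ p ∂μG) ^ (1 / p)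

/-- Weak `L_p` quasi-norm: `‖f‖_{L_{p,∞}} = sup_{λ>0} λ μ(|f|>λ)^{1/p}`. -/
def wLp (p : ℝ) (f : G → ℝ) : ℝ≥0∞ :=
  ⨆ t : ℝ≥0, (t : ℝ≥0∞) * (μG {x | (t : ℝ) < |f x|}) ^ (1 / p)

/-- Walsh–Fourier coefficient of an integrable function. -/
def fcoeff (f : G → ℝ) (j : ℕ) : ℝ := ∫ x, f x * walsh j x ∂μG

/-- Partial sums of the Walsh–Fourier series of a function. -/
def Sf (f : G → ℝ) (m : ℕ) (x : G) : ℝ := ∑ j ∈ Finset.range m, fcoeff f j * walsh j x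

/-- Fejér means of the Walsh–Fourier series of a function. -/
def σf (f : G → ℝ) (n : ℕ) (x : G) : ℝ := (1 / n) * ∑ k ∈ Finset.Icc 1 n, Sf f k x

/-- The martingale `(S_{2^m} g)_m` generated by a function `g`; used to interpret the
`H_p` norm of a function such as `σ_n F`. -/
def funMart (g : G → ℝ) : ℕ → G → ℝ := fun m => Sf g (2 ^ m)

/-- Modulus of continuity in `H_p`: `ω_{H_p}(1/2^n, F) = ‖F - S_{2^n} F‖_{H_p}`,
where `F - S_{2^n}F` is the martingale with `m`-th term `F_m - S_{min(2^n, 2^m)}F`. -/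
def ωHp (p : ℝ) (n : ℕ) (F : ℕ → G → ℝ) : ℝ≥0∞ :=
  HpNorm p (fun m x => F m x - S F (min (2 ^ n) (2 ^ m)) x)

/-- The a.e. limit of a martingale (as a limsup, which agrees a.e. with the limit
for martingales in `H_p`). -/
def mLim (F : ℕ → G → ℝ) (x : G) : ℝ := Filter.limsup (fun m => F m x) Filter.atTop

/-- The set `E_l := I_{l+1}(e_{l-1} + e_l)`, with the convention
`I_1(e_{-1}+e_0) = I_2(e_0+e_1)` for `l = 0`. -/
def Eset (l : ℕ) : Set G :=
  if l = 0 then cyl 2 (e 0 + e 1) else cyl (l + 1) (e (l - 1) + e l)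

section FejerAux

open Finset

lemma rade_cases (k : ℕ) (x : G) : rade k x = 1 ∨ rade k x = -1 := by
  unfold rade
  rcases Nat.even_or_odd ((x k).val) with h | h
  · left; exact Even.neg_one_pow h
  · right; exact Odd.neg_one_pow h

lemma abs_rade (k : ℕ) (x : G) : |rade k x| = 1 := by
  rcases rade_cases k x with h | h <;> rw [h] <;> norm_num

lemma walsh_eq_prod (n N : ℕ) (hN : n + 1 ≤ N) (x : G) :
    walsh n x = ∏ k ∈ Finset.range N, (if n.testBit k then rade k x else 1) := by
  unfold walsh
  apply Finset.prod_subset (Finset.range_subset_range.2 hN)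
  intro k hk hk'
  simp only [Finset.mem_range, not_lt] at hk'
  have hb : n.testBit k = false :=
    Nat.testBit_lt_two_pow (lt_of_lt_of_le (Nat.lt_two_pow_self (n := n))
      (Nat.pow_le_pow_right (by norm_num) (by omega)))
  simp [hb]

lemma abs_walsh (n : ℕ) (x : G) : |walsh n x| = 1 := by
  unfold walsh
  rw [Finset.abs_prod]
  apply Finset.prod_eq_one
  intro k _
  split_ifs
  · exact abs_rade k x
  · exact abs_one

lemma walsh_add {L a : ℕ} (j : ℕ) (hd : 2 ^ L ∣ a) (hj : j < 2 ^ L) (x : G) :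
    walsh (a + j) x = walsh a x * walsh j x := by
  obtain ⟨b, rfl⟩ := hd
  set N := 2 ^ L * b + j + 1 + L with hNdef
  rw [walsh_eq_prod (2 ^ L * b + j) N (by omega) x,
      walsh_eq_prod (2 ^ L * b) N (by omega) x,
      walsh_eq_prod j N (by omega) x, ← Finset.prod_mul_distrib]
  apply Finset.prod_congr rfl
  intro k _
  have h1 : (2 ^ L * b + j).testBit k
      = if k < L then j.testBit k else b.testBit (k - L) :=
    Nat.testBit_two_pow_mul_add b hj k
  have h2 : (2 ^ L * b).testBit k
      = if k < L then Nat.testBit 0 k else b.testBit (k - L) := by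
    have := Nat.testBit_two_pow_mul_add b (Nat.two_pow_pos L) k
    simpa using this
  by_cases hk : k < L
  · have hj2 : Nat.testBit 0 k = false := Nat.zero_testBit k
    rw [h1, h2, if_pos hk, if_pos hk, hj2]
    simp
  · have hjk : j.testBit k = false :=
      Nat.testBit_lt_two_pow (lt_of_lt_of_le hj
        (Nat.pow_le_pow_right (by norm_num) (by omega)))
    rw [h1, h2, if_neg hk, if_neg hk, hjk]
    simp

lemma D_add {L a : ℕ} (j : ℕ) (hd : 2 ^ L ∣ a) (hj : j ≤ 2 ^ L) (x : G) :
    D (a + j) x = D a x + walsh a x * D j x := by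
  unfold D
  rw [Finset.sum_range_add]
  congr 1
  rw [Finset.mul_sum]
  apply Finset.sum_congr rfl
  intro i hi
  rw [Finset.mem_range] at hi
  exact walsh_add i hd (by omega) x

/-- `SK n = n K_n` (the un-normalized Fejér sum). -/
noncomputable def SK (n : ℕ) (x : G) : ℝ := ∑ k ∈ Finset.Icc 1 n, D k x

lemma SK_range (n : ℕ) (x : G) : SK n x = ∑ k ∈ Finset.range n, D (k + 1) x := by
  induction n with
  | zero => simp [SK]
  | succ n ih =>
      rw [SK, Finset.sum_Icc_succ_top (by omega), ← SK, ih, Finset.sum_range_succ]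

lemma K_eq_SK {n : ℕ} (hn : n ≠ 0) (x : G) : (n : ℝ) * K n x = SK n x := by
  unfold K SK
  have : (n : ℝ) ≠ 0 := Nat.cast_ne_zero.2 hn
  field_simp

lemma SK_add {L a : ℕ} (j : ℕ) (hd : 2 ^ L ∣ a) (hj : j ≤ 2 ^ L) (x : G) :
    SK (a + j) x = SK a x + (j : ℝ) * D a x + walsh a x * SK j x := by
  rw [SK_range, SK_range, SK_range, Finset.sum_range_add]
  have hcongr : ∀ i ∈ Finset.range j, D (a + i + 1) x
      = D a x + walsh a x * D (i + 1) x := by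
    intro i hi
    rw [Finset.mem_range] at hi
    rw [show a + i + 1 = a + (i + 1) by omega]
    exact D_add (i + 1) hd (by omega) x
  rw [Finset.sum_congr rfl hcongr, Finset.sum_add_distrib, Finset.sum_const,
    Finset.card_range, ← Finset.mul_sum, nsmul_eq_mul]
  ring

lemma walsh_two_pow (k : ℕ) (x : G) : walsh (2 ^ k) x = rade k x := by
  unfold walsh
  rw [Finset.prod_eq_single_of_mem k]
  · simp [Nat.testBit_two_pow_self]
  · rw [Finset.mem_range]
    have := Nat.lt_two_pow_self (n := k)
    omega
  · intro b _ hb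
    have : (2 ^ k).testBit b = false := Nat.testBit_two_pow_of_ne (Ne.symm hb)
    simp [this]

lemma D_two_pow_succ (k : ℕ) (x : G) :
    D (2 ^ (k + 1)) x = (1 + rade k x) * D (2 ^ k) x := by
  have h2 : (2 : ℕ) ^ (k + 1) = 2 ^ k + 2 ^ k := by ring
  rw [h2, D_add (2 ^ k) dvd_rfl le_rfl x, walsh_two_pow]
  ring

lemma D_two_pow_cases (k : ℕ) (x : G) : D (2 ^ k) x = 0 ∨ D (2 ^ k) x = (2 : ℝ) ^ k := by
  induction k with
  | zero =>
      right
      simp [D, walsh]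
  | succ k ih =>
      rw [D_two_pow_succ]
      rcases rade_cases k x with hr | hr
      · rcases ih with h | h
        · left; rw [hr, h]; ring
        · right; rw [hr, h]; ring
      · left; rw [hr]; ring

lemma D_two_pow_nonneg (k : ℕ) (x : G) : 0 ≤ D (2 ^ k) x := by
  rcases D_two_pow_cases k x with h | h <;> rw [h] <;> positivity

lemma rade_one_of_D_max (k : ℕ) (x : G) (h : D (2 ^ k) x = (2 : ℝ) ^ k) :
    ∀ t < k, rade t x = 1 := by
  induction k with
  | zero => omega
  | succ k ih =>
      rw [D_two_pow_succ] at h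
      rcases rade_cases k x with hr | hr
      · have hD : D (2 ^ k) x = (2 : ℝ) ^ k := by
          rcases D_two_pow_cases k x with h0 | h0
          · exfalso
            rw [h0, mul_zero] at h
            have : (0 : ℝ) < 2 ^ (k + 1) := by positivity
            linarith [this, h.symm]
          · exact h0
        intro t ht
        rcases Nat.lt_succ_iff_lt_or_eq.1 ht with ht' | ht'
        · exact ih hD t ht'
        · rw [ht']; exact hr
      · exfalso
        rw [hr] at h
        have : (0 : ℝ) < 2 ^ (k + 1) := by positivity
        simp at h
        linarith [this, h.symm]

lemma walsh_one_of (mm : ℕ) (x : G) (h : ∀ t < mm, rade t x = 1) :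
    ∀ j < 2 ^ mm, walsh j x = 1 := by
  intro j hj
  unfold walsh
  apply Finset.prod_eq_one
  intro t _
  split_ifs with ht
  · apply h
    by_contra hc
    push_neg at hc
    have h1 : 2 ^ t ≤ j := Nat.ge_two_pow_of_testBit ht
    have h2 : (2 : ℕ) ^ mm ≤ 2 ^ t := Nat.pow_le_pow_right (by norm_num) hc
    omega
  · rfl

lemma D_eq_id_of (mm : ℕ) (x : G) (h : ∀ t < mm, rade t x = 1) :
    ∀ k ≤ 2 ^ mm, D k x = (k : ℝ) := by
  intro k hk
  unfold D
  have : ∀ j ∈ Finset.range k, walsh j x = 1 := by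
    intro j hj
    rw [Finset.mem_range] at hj
    exact walsh_one_of mm x h j (by omega)
  rw [Finset.sum_congr rfl this]
  simp

lemma D_le_two_abs_SK (mm : ℕ) (x : G) :
    (2 : ℝ) ^ mm * D (2 ^ mm) x ≤ 2 * |SK (2 ^ mm) x| := by
  rcases D_two_pow_cases mm x with h | h
  · rw [h, mul_zero]; positivity
  · rw [h]
    have hr := rade_one_of_D_max mm x h
    have hD := D_eq_id_of mm x hr
    set N := 2 ^ mm with hN
    have hSK : SK N x = ((∑ k ∈ Finset.range N, (k + 1) : ℕ) : ℝ) := by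
      rw [SK_range]
      push_cast
      apply Finset.sum_congr rfl
      intro k hk
      rw [Finset.mem_range] at hk
      rw [hD (k + 1) (by omega)]
      push_cast
      ring
    have hnat : (∑ k ∈ Finset.range N, (k + 1)) * 2 = (N + 1) * N := by
      have h1 : (∑ k ∈ Finset.range N, (k + 1)) = ∑ k ∈ Finset.range (N + 1), k := by
        rw [Finset.sum_range_succ' (fun k => k) N]
        simp
      rw [h1, Finset.sum_range_id_mul_two]
      simp
    have hpos : (0 : ℝ) ≤ SK N x := by rw [hSK]; positivity
    rw [abs_of_nonneg hpos, hSK]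
    have : ((∑ k ∈ Finset.range N, (k + 1) : ℕ) : ℝ) * 2 = ((N : ℝ) + 1) * N := by
      exact_mod_cast congrArg (Nat.cast : ℕ → ℝ) hnat
    have hcast : ((N : ℕ) : ℝ) = (2 : ℝ) ^ mm := by rw [hN]; push_cast; ring
    nlinarith [this, hcast]

lemma D_block (l : ℕ) : ∀ m, l ≤ m → ∀ x : G,
    |D (2 ^ (m + 1) - 2 ^ l) x| ≤ ∑ k ∈ Finset.Icc l m, D (2 ^ k) x := by
  intro m
  induction m with
  | zero =>
      intro hl x
      interval_cases l
      have h0 : 2 ^ (0 + 1) - 2 ^ 0 = 2 ^ 0 := by norm_num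
      rw [h0]
      have hnn := D_two_pow_nonneg 0 x
      simp only [pow_zero] at hnn ⊢
      simp [abs_of_nonneg hnn]
  | succ m ih =>
      intro hl x
      rcases Nat.lt_or_ge l (m + 1) with hlm | hlm
      · have hle : l ≤ m := by omega
        have hpow : (2 : ℕ) ^ l ≤ 2 ^ (m + 1) := Nat.pow_le_pow_right (by norm_num) (by omega)
        have hsplit : 2 ^ (m + 1 + 1) - 2 ^ l = 2 ^ (m + 1) + (2 ^ (m + 1) - 2 ^ l) := by
          rw [show (2 : ℕ) ^ (m + 1 + 1) = 2 ^ (m + 1) + 2 ^ (m + 1) from by ring,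
            Nat.add_sub_assoc hpow]
        rw [hsplit, D_add (2 ^ (m + 1) - 2 ^ l) dvd_rfl (Nat.sub_le _ _) x]
        have h1 : |D (2 ^ (m + 1)) x + walsh (2 ^ (m + 1)) x * D (2 ^ (m + 1) - 2 ^ l) x|
            ≤ D (2 ^ (m + 1)) x + |D (2 ^ (m + 1) - 2 ^ l) x| := by
          calc _ ≤ |D (2 ^ (m + 1)) x| + |walsh (2 ^ (m + 1)) x * D (2 ^ (m + 1) - 2 ^ l) x| :=
                abs_add_le _ _
            _ = D (2 ^ (m + 1)) x + |D (2 ^ (m + 1) - 2 ^ l) x| := by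
                rw [abs_of_nonneg (D_two_pow_nonneg _ x), abs_mul, abs_walsh, one_mul]
        calc |D (2 ^ (m + 1)) x + walsh (2 ^ (m + 1)) x * D (2 ^ (m + 1) - 2 ^ l) x|
            ≤ D (2 ^ (m + 1)) x + |D (2 ^ (m + 1) - 2 ^ l) x| := h1
          _ ≤ D (2 ^ (m + 1)) x + ∑ k ∈ Finset.Icc l m, D (2 ^ k) x := by
              linarith [ih hle x]
          _ = ∑ k ∈ Finset.Icc l (m + 1), D (2 ^ k) x := by
              rw [Finset.sum_Icc_succ_top (by omega)]
              ring
      · obtain rfl : l = m + 1 := by omega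
        have h2 : 2 ^ (m + 1 + 1) - 2 ^ (m + 1) = 2 ^ (m + 1) := by
          rw [show (2 : ℕ) ^ (m + 1 + 1) = 2 ^ (m + 1) + 2 ^ (m + 1) from by ring,
            Nat.add_sub_cancel]
        rw [h2]
        simp [abs_of_nonneg (D_two_pow_nonneg (m + 1) x)]

lemma abs_SK_two_pow (k : ℕ) (x : G) :
    |SK (2 ^ k) x| = (2 : ℝ) ^ k * |K (2 ^ k) x| := by
  have h := K_eq_SK (n := 2 ^ k) (by positivity) x
  have : |((2 ^ k : ℕ) : ℝ) * K (2 ^ k) x| = |SK (2 ^ k) x| := by rw [h]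
  rw [← this, abs_mul]
  congr 1
  · rw [abs_of_nonneg (by positivity)]
    push_cast
    ring

lemma abs_SK_two_pow_succ (m : ℕ) (x : G) :
    |SK (2 ^ (m + 1)) x| ≤ 4 * |SK (2 ^ m) x| := by
  have h2 : (2 : ℕ) ^ (m + 1) = 2 ^ m + 2 ^ m := by ring
  rw [h2, SK_add (2 ^ m) dvd_rfl le_rfl x]
  have hD := D_le_two_abs_SK m x
  have hw : |walsh (2 ^ m) x * SK (2 ^ m) x| = |SK (2 ^ m) x| := by
    rw [abs_mul, abs_walsh, one_mul]
  have hcast : ((2 ^ m : ℕ) : ℝ) = (2 : ℝ) ^ m := by push_cast; ring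
  calc |SK (2 ^ m) x + ((2 ^ m : ℕ) : ℝ) * D (2 ^ m) x + walsh (2 ^ m) x * SK (2 ^ m) x|
      ≤ |SK (2 ^ m) x| + ((2 ^ m : ℕ) : ℝ) * D (2 ^ m) x + |walsh (2 ^ m) x * SK (2 ^ m) x| := by
        have hDnn : 0 ≤ ((2 ^ m : ℕ) : ℝ) * D (2 ^ m) x := by
          apply mul_nonneg (by positivity) (D_two_pow_nonneg m x)
        calc _ ≤ |SK (2 ^ m) x + ((2 ^ m : ℕ) : ℝ) * D (2 ^ m) x|
              + |walsh (2 ^ m) x * SK (2 ^ m) x| := abs_add_le _ _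
          _ ≤ _ := by
              have := abs_add_le (SK (2 ^ m) x) (((2 ^ m : ℕ) : ℝ) * D (2 ^ m) x)
              rw [abs_of_nonneg hDnn] at this
              linarith
    _ ≤ 4 * |SK (2 ^ m) x| := by
        rw [hw, hcast]
        linarith

lemma SK_block (l m : ℕ) (hlm : l ≤ m) (x : G) :
    |SK (2 ^ (m + 1) - 2 ^ l) x| ≤
      4 * ((2 : ℝ) ^ l * |K (2 ^ l) x| + (2 : ℝ) ^ m * |K (2 ^ m) x|
        + (2 : ℝ) ^ l * ∑ k ∈ Finset.Icc l m, D (2 ^ k) x) := by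
  set q := 2 ^ (m + 1) - 2 ^ l with hq
  have hpow : (2 : ℕ) ^ l ≤ 2 ^ (m + 1) := Nat.pow_le_pow_right (by norm_num) (by omega)
  have hdvd : 2 ^ l ∣ q := Nat.dvd_sub (pow_dvd_pow 2 (by omega)) dvd_rfl
  have hqadd : q + 2 ^ l = 2 ^ (m + 1) := by omega
  have hsplit := SK_add (L := l) (a := q) (2 ^ l) hdvd le_rfl x
  rw [hqadd] at hsplit
  have hSKq : SK q x = SK (2 ^ (m + 1)) x - ((2 ^ l : ℕ) : ℝ) * D q x
      - walsh q x * SK (2 ^ l) x := by linarith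
  have hcast : ((2 ^ l : ℕ) : ℝ) = (2 : ℝ) ^ l := by push_cast; ring
  have hDq : |D q x| ≤ ∑ k ∈ Finset.Icc l m, D (2 ^ k) x := D_block l m hlm x
  have h1 : |SK q x| ≤ |SK (2 ^ (m + 1)) x| + (2 : ℝ) ^ l * |D q x|
      + |SK (2 ^ l) x| := by
    rw [hSKq]
    have t1 : |SK (2 ^ (m + 1)) x - ((2 ^ l : ℕ) : ℝ) * D q x - walsh q x * SK (2 ^ l) x|
        ≤ |SK (2 ^ (m + 1)) x| + |((2 ^ l : ℕ) : ℝ) * D q x|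
          + |walsh q x * SK (2 ^ l) x| := by
      calc _ ≤ |SK (2 ^ (m + 1)) x - ((2 ^ l : ℕ) : ℝ) * D q x|
            + |walsh q x * SK (2 ^ l) x| := abs_sub _ _
        _ ≤ _ := by
            have := abs_sub (SK (2 ^ (m + 1)) x) (((2 ^ l : ℕ) : ℝ) * D q x)
            linarith
    rw [abs_mul (((2 ^ l : ℕ) : ℝ)), abs_mul, abs_walsh, one_mul, hcast,
      abs_of_nonneg (show (0:ℝ) ≤ (2:ℝ) ^ l by positivity)] at t1
    rw [hcast]
    exact t1
  have h2 := abs_SK_two_pow_succ m x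
  rw [abs_SK_two_pow m x] at h2
  rw [abs_SK_two_pow l x] at h1
  have hDsum : (2 : ℝ) ^ l * |D q x| ≤ (2 : ℝ) ^ l * ∑ k ∈ Finset.Icc l m, D (2 ^ k) x := by
    apply mul_le_mul_of_nonneg_left hDq (by positivity)
  have hKl : (0 : ℝ) ≤ (2 : ℝ) ^ l * |K (2 ^ l) x| := by positivity
  have hKm : (0 : ℝ) ≤ (2 : ℝ) ^ m * |K (2 ^ m) x| := by positivity
  have hDnn : (0 : ℝ) ≤ (2 : ℝ) ^ l * ∑ k ∈ Finset.Icc l m, D (2 ^ k) x := by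
    apply mul_nonneg (by positivity)
    exact Finset.sum_nonneg fun k _ => D_two_pow_nonneg k x
  linarith

end FejerAux


lemma sum_Icc_two_pow : ∀ b a : ℕ, a ≤ b →
    ∑ k ∈ Finset.Icc a b, 2 ^ k = 2 ^ (b + 1) - 2 ^ a := by
  intro b
  induction b with
  | zero =>
      intro a ha
      interval_cases a
      simp
  | succ b ih =>
      intro a ha
      rcases Nat.lt_or_ge a (b + 1) with h' | h'
      · rw [Finset.sum_Icc_succ_top (by omega), ih a (by omega)]
        have h2 : (2 : ℕ) ^ a ≤ 2 ^ (b + 1) := Nat.pow_le_pow_right (by norm_num) (by omega)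
        have h3 : (2 : ℕ) ^ (b + 1 + 1) = 2 ^ (b + 1) + 2 ^ (b + 1) := by ring
        rw [h3]
        set X := (2 : ℕ) ^ a with hX
        set Y := (2 : ℕ) ^ (b + 1) with hY
        clear_value X Y
        omega
      · obtain rfl : a = b + 1 := by omega
        rw [Finset.Icc_self, Finset.sum_singleton]
        have h3 : (2 : ℕ) ^ (b + 1 + 1) = 2 ^ (b + 1) + 2 ^ (b + 1) := by ring
        rw [h3, Nat.add_sub_cancel]

/-- pointwise upper bound for `|n K_n|` in terms of the blocks of the
binary expansion of `n` and the variation `V(n)`. -/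
theorem fejer_block_upper_bound :
    ∃ c : ℝ, 0 < c ∧ ∀ (s : ℕ) (l m : ℕ → ℕ) (n : ℕ),
      1 ≤ s → (∀ i < s, l i ≤ m i) → (∀ i, i + 1 < s → m (i + 1) + 2 ≤ l i) →
      n = ∑ i ∈ Finset.range s, ∑ k ∈ Finset.Icc (l i) (m i), 2 ^ k →
      ∀ x : G, |(n : ℝ) * K n x| ≤
        c * (∑ A ∈ Finset.range s,
          ((2 : ℝ) ^ l A * |K (2 ^ l A) x| + (2 : ℝ) ^ m A * |K (2 ^ m A) x|
            + (2 : ℝ) ^ l A * ∑ k ∈ Finset.Icc (l A) (m A), D (2 ^ k) x)) + c * V n := by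
  refine ⟨5, by norm_num, ?_⟩
  intro s l m n hs hlm hml hn x
  set q : ℕ → ℕ := fun i => 2 ^ (m i + 1) - 2 ^ (l i) with hqdef
  have hqn : n = ∑ i ∈ Finset.range s, q i := by
    rw [hn]
    exact Finset.sum_congr rfl fun i hi =>
      sum_Icc_two_pow (m i) (l i) (hlm i (Finset.mem_range.1 hi))
  set U : ℕ → ℕ := fun A => ∑ i ∈ Finset.Ico A s, q i with hUdef
  set T : ℕ → ℝ := fun A =>
    (2 : ℝ) ^ l A * |K (2 ^ l A) x| + (2 : ℝ) ^ m A * |K (2 ^ m A) x|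
      + (2 : ℝ) ^ l A * ∑ k ∈ Finset.Icc (l A) (m A), D (2 ^ k) x with hTdef
  have hTnn : ∀ A, 0 ≤ T A := by
    intro A
    have h1 : (0 : ℝ) ≤ (2 : ℝ) ^ l A * |K (2 ^ l A) x| := by positivity
    have h2 : (0 : ℝ) ≤ (2 : ℝ) ^ m A * |K (2 ^ m A) x| := by positivity
    have h3 : (0 : ℝ) ≤ (2 : ℝ) ^ l A * ∑ k ∈ Finset.Icc (l A) (m A), D (2 ^ k) x :=
      mul_nonneg (by positivity) (Finset.sum_nonneg fun k _ => D_two_pow_nonneg k x)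
    simp only [hTdef]
    linarith
  have key : ∀ kk B, B + kk = s →
      (B < s → U B < 2 ^ (m B + 1)) ∧ |SK (U B) x| ≤ ∑ i ∈ Finset.Ico B s, 5 * T i := by
    intro kk
    induction kk with
    | zero =>
        intro B hB
        constructor
        · intro h; omega
        · have he : Finset.Ico B s = ∅ := Finset.Ico_eq_empty (by omega)
          have hU0 : U B = 0 := by simp [hUdef, he]
          have hSK0 : SK 0 x = 0 := by
            unfold SK
            rw [Finset.Icc_eq_empty (by omega), Finset.sum_empty]
          rw [hU0, hSK0, he, Finset.sum_empty, abs_zero]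
    | succ kk ih =>
        intro B hB
        have hBs : B < s := by omega
        have ihB := ih (B + 1) (by omega)
        have hlmB := hlm B hBs
        have hU1lt : U (B + 1) < 2 ^ l B := by
          rcases Nat.lt_or_ge (B + 1) s with h' | h'
          · have h1 := ihB.1 h'
            have h2 := hml B h'
            have h3 : (2 : ℕ) ^ (m (B + 1) + 1) ≤ 2 ^ l B :=
              Nat.pow_le_pow_right (by norm_num) (by omega)
            omega
          · have hU0 : U (B + 1) = 0 := by
              have he : Finset.Ico (B + 1) s = ∅ := Finset.Ico_eq_empty (by omega)
              simp [hUdef, he]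
            rw [hU0]
            exact Nat.two_pow_pos _
        have hUB : U B = q B + U (B + 1) := by
          simp only [hUdef]
          exact Finset.sum_eq_sum_Ico_succ_bot hBs _
        have hdvd : 2 ^ l B ∣ q B :=
          Nat.dvd_sub (pow_dvd_pow 2 (by omega)) dvd_rfl
        have hSKsplit := SK_add (L := l B) (a := q B) (U (B + 1)) hdvd (le_of_lt hU1lt) x
        constructor
        · intro _
          have hpw : (2 : ℕ) ^ l B ≤ 2 ^ (m B + 1) :=
            Nat.pow_le_pow_right (by norm_num) (by omega)
          have hqB : q B = 2 ^ (m B + 1) - 2 ^ l B := rfl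
          rw [hUB, hqB]
          set X := (2 : ℕ) ^ l B with hX
          set Y := (2 : ℕ) ^ (m B + 1) with hY
          clear_value X Y
          omega
        · rw [hUB, hSKsplit]
          have hb1 : |SK (q B) x + (U (B + 1) : ℝ) * D (q B) x
                + walsh (q B) x * SK (U (B + 1)) x|
              ≤ |SK (q B) x| + (U (B + 1) : ℝ) * |D (q B) x| + |SK (U (B + 1)) x| := by
            calc _ ≤ |SK (q B) x + (U (B + 1) : ℝ) * D (q B) x|
                  + |walsh (q B) x * SK (U (B + 1)) x| := abs_add_le _ _
              _ ≤ _ := by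
                  rw [abs_mul, abs_walsh, one_mul]
                  have h := abs_add_le (SK (q B) x) ((U (B + 1) : ℝ) * D (q B) x)
                  rw [abs_mul, abs_of_nonneg (show (0 : ℝ) ≤ (U (B + 1) : ℝ) by positivity)]
                    at h
                  linarith
          have hq2 : |SK (q B) x| ≤ 4 * T B := SK_block (l B) (m B) hlmB x
          have hU1le : (U (B + 1) : ℝ) ≤ (2 : ℝ) ^ l B := by
            have := le_of_lt hU1lt
            exact_mod_cast Nat.cast_le.2 this
          have hterm : (U (B + 1) : ℝ) * |D (q B) x|
              ≤ (2 : ℝ) ^ l B * ∑ k ∈ Finset.Icc (l B) (m B), D (2 ^ k) x :=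
            mul_le_mul hU1le (D_block (l B) (m B) hlmB x) (abs_nonneg _) (by positivity)
          have htermT : (U (B + 1) : ℝ) * |D (q B) x| ≤ T B := by
            have h1 : (0 : ℝ) ≤ (2 : ℝ) ^ l B * |K (2 ^ l B) x| := by positivity
            have h2 : (0 : ℝ) ≤ (2 : ℝ) ^ m B * |K (2 ^ m B) x| := by positivity
            simp only [hTdef]
            linarith
          have hrest := ihB.2
          rw [Finset.sum_eq_sum_Ico_succ_bot hBs]
          linarith
  have hn0 : n ≠ 0 := by
    have hq0 : 0 < q 0 := by
      have hlt : (2 : ℕ) ^ l 0 < 2 ^ (m 0 + 1) :=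
        Nat.pow_lt_pow_right (by norm_num) (by have := hlm 0 (by omega); omega)
      exact Nat.sub_pos_of_lt hlt
    have : q 0 ≤ n := by
      rw [hqn]
      exact Finset.single_le_sum (fun i _ => Nat.zero_le _) (Finset.mem_range.2 (by omega))
    omega
  have hkey := (key (s - 0) 0 (by omega)).2
  have hU0n : U 0 = n := by
    simp only [hUdef]
    rw [hqn, Finset.range_eq_Ico]
  rw [hU0n] at hkey
  rw [K_eq_SK hn0 x]
  have hVnn : (0 : ℝ) ≤ 5 * (V n : ℝ) := by positivity
  have hsum : ∑ i ∈ Finset.Ico 0 s, 5 * T i = 5 * ∑ A ∈ Finset.range s, T A := by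
    rw [← Finset.mul_sum]
    congr 1
    rw [Finset.range_eq_Ico]
  have hgoal : (∑ A ∈ Finset.range s,
      ((2 : ℝ) ^ l A * |K (2 ^ l A) x| + (2 : ℝ) ^ m A * |K (2 ^ m A) x|
        + (2 : ℝ) ^ l A * ∑ k ∈ Finset.Icc (l A) (m A), D (2 ^ k) x))
      = ∑ A ∈ Finset.range s, T A := by
    apply Finset.sum_congr rfl
    intro A _
    simp only [hTdef]
  rw [hgoal]
  rw [hsum] at hkey
  linarith
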